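/- Claim (A) of Section 3.2: If a system of random variables (not necessarily strongly consistently connected) is CbD-noncontextual, i.e., admits a multimaximally connected coupling, then every factual–counterfactual subsystem of it also admits a multimaximally connected coupling; that is, every CbD-noncontextual system satisfies generalized counterfactual definiteness (gCFD). -/
import Mathlib


open Finset

/-- A probability distribution on a finite type, given by a real-valued mass function:
nonnegative and summing to one. -/
def IsDist {α : Type} [Fintype α] (d : α → ℝ) : Prop :=
  (∀ a, 0 ≤ d a) ∧ ∑ a, d a = 1

/-- The pushforward (marginal) of a mass function along a map. -/
def margin {α β : Type} [Fintype α] [DecidableEq β] (d : α → ℝ) (f : α → β) : β → ℝ :=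
  fun b => ∑ a ∈ univ.filter (fun a => f a = b), d a

/-- `γ` is a coupling of the system `(μ c)_{c ∈ C}`: a probability measure on the product
over all pairs `(q, c)` with `q ≺ c` of `V q`, whose marginal on the coordinates of each
context `c` equals `μ c`. -/
def IsCoupling {Q C : Type} [Fintype Q] [DecidableEq Q] [Fintype C] [DecidableEq C]
    (mea : Q → C → Bool) (V : Q → Type) [∀ q, Fintype (V q)] [∀ q, DecidableEq (V q)]
    (μ : ∀ c : C, (∀ q : {q : Q // mea q c}, V q.1) → ℝ)
    (γ : (∀ p : {p : Q × C // mea p.1 p.2}, V p.1.1) → ℝ) : Prop :=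
  IsDist γ ∧
  ∀ c : C, margin γ (fun x (q : {q : Q // mea q c}) => x ⟨(q.1, c), q.2⟩) = μ c

/-- `γ` is multimaximally connected: for every content `q` and contexts `c, c'` in which
`q` is measured, the `γ`-probability that the `(q, c)`-coordinate equals the
`(q, c')`-coordinate is the greatest diagonal probability over all couplings of the
`q`-marginal of `μ c` with the `q`-marginal of `μ c'`. -/
def IsMultimaximal {Q C : Type} [Fintype Q] [DecidableEq Q] [Fintype C] [DecidableEq C]
    (mea : Q → C → Bool) (V : Q → Type) [∀ q, Fintype (V q)] [∀ q, DecidableEq (V q)]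
    (μ : ∀ c : C, (∀ q : {q : Q // mea q c}, V q.1) → ℝ)
    (γ : (∀ p : {p : Q × C // mea p.1 p.2}, V p.1.1) → ℝ) : Prop :=
  ∀ (q : Q) (c c' : C) (h : mea q c) (h' : mea q c'),
    IsGreatest
      {r : ℝ | ∃ ν : V q × V q → ℝ, IsDist ν ∧
          margin ν Prod.fst = margin (μ c) (fun x => x ⟨q, h⟩) ∧
          margin ν Prod.snd = margin (μ c') (fun x => x ⟨q, h'⟩) ∧
          r = ∑ v : V q, ν (v, v)}
      (∑ x ∈ univ.filter
          (fun x : ∀ p : {p : Q × C // mea p.1 p.2}, V p.1.1 =>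
            x ⟨(q, c), h⟩ = x ⟨(q, c'), h'⟩), γ x)

/-- A system is CbD-noncontextual if it has a multimaximally connected coupling. -/
def CbDNoncontextual {Q C : Type} [Fintype Q] [DecidableEq Q] [Fintype C] [DecidableEq C]
    (mea : Q → C → Bool) (V : Q → Type) [∀ q, Fintype (V q)] [∀ q, DecidableEq (V q)]
    (μ : ∀ c : C, (∀ q : {q : Q // mea q c}, V q.1) → ℝ) : Prop :=
  ∃ γ, IsCoupling mea V μ γ ∧ IsMultimaximal mea V μ γ

lemma margin_filter_sum {α β : Type} [Fintype α] [Fintype β] [DecidableEq β]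
    (d : α → ℝ) (f : α → β) (P : β → Prop) [DecidablePred P] :
    ∑ b ∈ univ.filter P, margin d f b = ∑ a ∈ univ.filter (fun a => P (f a)), d a := by
  simp only [margin]
  rw [Finset.sum_fiberwise_eq_sum_filter]
  congr 1
  ext a
  simp

lemma margin_margin {α β δ : Type} [Fintype α] [Fintype β] [DecidableEq β] [DecidableEq δ]
    (d : α → ℝ) (f : α → β) (g : β → δ) :
    margin (margin d f) g = margin d (g ∘ f) := by
  funext b
  show ∑ y ∈ univ.filter (fun y => g y = b), margin d f y = _
  rw [margin_filter_sum]
  rfl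

lemma margin_sum {α β : Type} [Fintype α] [Fintype β] [DecidableEq β]
    (d : α → ℝ) (f : α → β) : ∑ b, margin d f b = ∑ a, d a := by
  have := margin_filter_sum d f (fun _ => True)
  simpa using this

/-- **Claim (A) of Section 3.2.** If a system of random variables (not necessarily
strongly consistently connected) is CbD-noncontextual, then for every factual context `c0`
its factual–counterfactual subsystem — whose contents are the contents measured in `c0`,
and whose distribution in each context `c` is the marginal of `μ c` on the contents
measured both in `c` and in `c0` — is also CbD-noncontextual. That is, every
CbD-noncontextual system satisfies generalized counterfactual definiteness (gCFD). -/
theorem cbd_noncontextual_implies_gCFD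
    {Q C : Type} [Fintype Q] [DecidableEq Q] [Fintype C] [DecidableEq C]
    (mea : Q → C → Bool) (V : Q → Type) [∀ q, Fintype (V q)] [∀ q, DecidableEq (V q)]
    (μ : ∀ c : C, (∀ q : {q : Q // mea q c}, V q.1) → ℝ)
    (hdist : ∀ c, IsDist (μ c))
    (hnc : CbDNoncontextual mea V μ) (c0 : C) :
    CbDNoncontextual
      (fun (q : {q : Q // mea q c0}) (c : C) => mea q.1 c)
      (fun q => V q.1)
      (fun c => margin (μ c)
        (fun x (q : {q : {q : Q // mea q c0} // mea q.1 c}) => x ⟨q.1.1, q.2⟩)) := by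
  obtain ⟨γ, ⟨⟨hpos, hsum⟩, hctx⟩, hmm⟩ := hnc
  refine ⟨margin γ (fun x (p : {p : {q : Q // mea q c0} × C // mea p.1.1 p.2}) =>
      x ⟨(p.1.1.1, p.1.2), p.2⟩), ⟨⟨?_, ?_⟩, ?_⟩, ?_⟩
  · intro a
    exact Finset.sum_nonneg fun x _ => hpos x
  · rw [margin_sum, hsum]
  · intro c
    rw [margin_margin]
    show _ = margin (μ c) _
    rw [← hctx c, margin_margin]
    rfl
  · intro q c c' h h'
    have := hmm q.1 c c' h h'
    have hset : ∀ cc (hh : mea q.1 cc),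
        margin (margin (μ cc)
          (fun x (q' : {q' : {q' : Q // mea q' c0} // mea q'.1 cc}) => x ⟨q'.1.1, q'.2⟩))
          (fun x => x ⟨q, hh⟩)
        = margin (μ cc) (fun x => x ⟨q.1, hh⟩) := by
      intro cc hh
      rw [margin_margin]
      rfl
    have hT : (∑ x ∈ univ.filter
          (fun x : ∀ p : {p : {q : Q // mea q c0} × C // mea p.1.1 p.2}, V p.1.1.1 =>
            x ⟨(q, c), h⟩ = x ⟨(q, c'), h'⟩),
          margin γ (fun x (p : {p : {q : Q // mea q c0} × C // mea p.1.1 p.2}) =>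
            x ⟨(p.1.1.1, p.1.2), p.2⟩) x)
        = ∑ x ∈ univ.filter
          (fun x : ∀ p : {p : Q × C // mea p.1 p.2}, V p.1.1 =>
            x ⟨(q.1, c), h⟩ = x ⟨(q.1, c'), h'⟩), γ x := by
      rw [margin_filter_sum]
    rw [hset c h, hset c' h', hT] at *
    exact this
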